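/- Let 0 → L_1 → L → L_2 → 0 be a short exact sequence of finitely generated modules over a Noetherian local ring (A, m). Suppose that for every ε > 0 and each i = 1, 2 there exists N_i such that every submodule M_i ⊆ m^{N_i} L_i with length(L_i/M_i) < ∞ satisfies μ(M_i) < ε·length(L_i/M_i). Then for every ε > 0 there exists N such that every submodule M ⊆ m^N L with length(L/M) < ∞ satisfies μ(M) < ε·length(L/M). -/

import Mathlib

open IsLocalRing Filter


universe u v

section uliftAR
variable {R : Type u} [CommRing R]

/-- Lift a submodule along `ULift` on both the ring and the module. -/
def liftSub {M : Type v} [AddCommGroup M] [Module R M] (P : Submodule R M) :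
    Submodule (ULift.{v} R) (ULift.{u} M) where
  carrier := {x | x.down ∈ P}
  add_mem' := fun ha hb => P.add_mem ha hb
  zero_mem' := P.zero_mem
  smul_mem' := fun r x hx => P.smul_mem r.down hx

/-- Lift an ideal along `ULift`. -/
def liftIdeal (I : Ideal R) : Ideal (ULift.{v} R) where
  carrier := {x | x.down ∈ I}
  add_mem' := fun ha hb => I.add_mem ha hb
  zero_mem' := I.zero_mem
  smul_mem' := fun r x hx => I.mul_mem_left r.down hx

variable {M : Type v} [AddCommGroup M] [Module R M]

lemma mem_liftSub {P : Submodule R M} {x : ULift M} : x ∈ liftSub.{u,v} P ↔ x.down ∈ P := Iff.rfl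

lemma liftSub_inj {P Q : Submodule R M} (h : liftSub.{u,v} P = liftSub Q) : P = Q := by
  ext m
  have := Submodule.ext_iff.mp h (ULift.up m)
  simpa [mem_liftSub] using this

lemma liftSub_inf (P Q : Submodule R M) :
    liftSub.{u,v} (P ⊓ Q) = liftSub P ⊓ liftSub Q := rfl

lemma liftSub_top : liftSub.{u,v} (⊤ : Submodule R M) = ⊤ := rfl

lemma liftSub_smul (J : Ideal R) (P : Submodule R M) :
    liftIdeal.{u,v} J • liftSub.{u,v} P = liftSub (J • P) := by
  apply le_antisymm
  · refine Submodule.smul_le.mpr fun r hr x hx => ?_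
    exact Submodule.smul_mem_smul (hr : r.down ∈ J) (hx : x.down ∈ P)
  · intro x hx
    have key : ∀ m : M, m ∈ J • P → (ULift.up m : ULift M) ∈ liftIdeal.{u,v} J • liftSub.{u,v} P := by
      intro m hm
      refine Submodule.smul_induction_on hm (fun r hr n hn => ?_) (fun a b ha hb => ?_)
      · exact Submodule.smul_mem_smul (show (ULift.up r : ULift.{v} R) ∈ liftIdeal.{u,v} J from hr)
          (show (ULift.up n : ULift M) ∈ liftSub P from hn)
      · exact Submodule.add_mem _ ha hb
    exact key x.down hx

lemma liftIdeal_mul (I J : Ideal R) :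
    liftIdeal.{u,v} (I * J) = liftIdeal I * liftIdeal J := by
  apply le_antisymm
  · intro x hx
    have key : ∀ m : R, m ∈ I * J → (ULift.up m : ULift R) ∈ liftIdeal.{u,v} I * liftIdeal.{u,v} J := by
      intro m hm
      refine Submodule.smul_induction_on hm (fun r hr n hn => ?_) (fun a b ha hb => ?_)
      · exact Ideal.mul_mem_mul (show (ULift.up r : ULift.{v} R) ∈ liftIdeal.{u,v} I from hr)
          (show (ULift.up n : ULift.{v} R) ∈ liftIdeal.{u,v} J from hn)
      · exact Submodule.add_mem _ ha hb
    exact key x.down hx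
  · refine Ideal.mul_le.mpr fun r hr s hs => ?_
    exact Ideal.mul_mem_mul (hr : r.down ∈ I) (hs : s.down ∈ J)

lemma liftIdeal_top : liftIdeal.{u,v} (⊤ : Ideal R) = ⊤ := by
  ext x; simp [liftIdeal]

lemma liftIdeal_pow (I : Ideal R) (n : ℕ) :
    liftIdeal.{u,v} (I ^ n) = liftIdeal I ^ n := by
  induction n with
  | zero => simpa [pow_zero, Ideal.one_eq_top] using liftIdeal_top
  | succ n ih => rw [pow_succ, pow_succ, liftIdeal_mul, ih]

lemma artin_rees {M : Type v} [IsNoetherianRing R] [AddCommGroup M] [Module R M]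
    [Module.Finite R M] (I : Ideal R) (N : Submodule R M) :
    ∃ k : ℕ, ∀ n ≥ k, I ^ n • (⊤ : Submodule R M) ⊓ N
      = I ^ (n - k) • (I ^ k • (⊤ : Submodule R M) ⊓ N) := by
  haveI : IsNoetherianRing (ULift.{v} R) :=
    isNoetherianRing_of_ringEquiv R ULift.ringEquiv.symm
  haveI : Module.Finite (ULift.{v} R) (ULift.{u} M) := by
    obtain ⟨S, hS⟩ := Module.Finite.fg_top (R := R) (M := M)
    classical
    refine ⟨⟨S.image ULift.up, ?_⟩⟩
    rw [eq_top_iff]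
    rintro x -
    have hx : x.down ∈ Submodule.span R (S : Set M) := by rw [hS]; trivial
    have key : ∀ m ∈ Submodule.span R (S : Set M), (ULift.up m : ULift M) ∈
        Submodule.span (ULift.{v} R) ((S.image ULift.up : Finset (ULift M)) : Set (ULift M)) := by
      intro m hm
      induction hm using Submodule.span_induction with
      | mem y hy => exact Submodule.subset_span (Finset.mem_coe.mpr (Finset.mem_image.mpr ⟨y, hy, rfl⟩))
      | zero => exact Submodule.zero_mem _
      | add a b _ _ iha ihb => exact Submodule.add_mem _ iha ihb
      | smul r a _ iha =>
          exact Submodule.smul_mem _ (ULift.up r) iha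
    exact key x.down hx
  obtain ⟨k, hk⟩ := Ideal.exists_pow_inf_eq_pow_smul
    (liftIdeal.{u,v} I) (liftSub.{u,v} N)
  refine ⟨k, fun n hn => ?_⟩
  have h := hk n hn
  rw [← liftIdeal_pow, ← liftIdeal_pow, ← liftIdeal_pow, ← liftSub_top,
    liftSub_smul, ← liftSub_inf, liftSub_smul, ← liftSub_inf, liftSub_smul] at h
  exact liftSub_inj h

end uliftAR

/-- Length of a module (as a natural number): the Krull dimension of its submodule lattice. -/
noncomputable def flength (R M : Type*) [Ring R] [AddCommGroup M] [Module R M] : ℕ :=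
  ((Order.krullDim (Submodule R M)).unbotD 0).toNat

/-- Minimal number of generators of a submodule. -/
noncomputable def mu (R : Type*) {M : Type*} [Ring R] [AddCommGroup M] [Module R M]
    (N : Submodule R M) : ℕ :=
  sInf {n | ∃ s : Finset M, s.card = n ∧ Submodule.span R (s : Set M) = N}

/-- Hilbert–Samuel multiplicity of an ideal in a `d`-dimensional local ring. -/
noncomputable def eMult (R : Type*) [CommRing R] (d : ℕ) (I : Ideal R) : ℝ :=
  Filter.limsup
    (fun n : ℕ => (d.factorial : ℝ) * (flength R (R ⧸ I ^ n) : ℝ) / (n : ℝ) ^ d)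
    Filter.atTop

/-- An ideal of a local ring is `m`-primary. -/
def IsMPrimary (R : Type*) [CommRing R] [IsLocalRing R] (I : Ideal R) : Prop :=
  I ≠ ⊤ ∧ ∃ k : ℕ, maximalIdeal R ^ k ≤ I

/-- A commutative ring is regular local. -/
def IsRegularLocal (A : Type*) [CommRing A] : Prop :=
  IsNoetherianRing A ∧ ∃ _ : IsLocalRing A,
    ringKrullDim A = (mu A (IsLocalRing.maximalIdeal A) : WithBot ℕ∞)

/-- Length of `J/I` for ideals `I ≤ J`. -/
noncomputable def qlen (R : Type*) [CommRing R] (I J : Ideal R) : ℕ :=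
  flength R (Submodule.map (Submodule.mkQ (I : Submodule R R)) (J : Submodule R R))



section muLemmas
variable {A M M' : Type*} [Ring A] [AddCommGroup M] [Module A M] [AddCommGroup M'] [Module A M']

lemma mu_le' {N : Submodule A M} {s : Finset M} (h : Submodule.span A (s : Set M) = N) :
    mu A N ≤ s.card := Nat.sInf_le ⟨s, rfl, h⟩

lemma mu_spec {N : Submodule A M} (hN : N.FG) :
    ∃ s : Finset M, s.card = mu A N ∧ Submodule.span A (s : Set M) = N := by
  have hne : {n | ∃ s : Finset M, s.card = n ∧ Submodule.span A (s : Set M) = N}.Nonempty := by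
    obtain ⟨s, hs⟩ := hN; exact ⟨s.card, s, rfl, hs⟩
  obtain ⟨s, h1, h2⟩ := Nat.sInf_mem hne
  exact ⟨s, h1, h2⟩

lemma mu_map_le (φ : M →ₗ[A] M') {N : Submodule A M} (hN : N.FG) :
    mu A (N.map φ) ≤ mu A N := by
  classical
  obtain ⟨s, hcard, hspan⟩ := mu_spec hN
  have h : Submodule.span A ((s.image φ : Finset M') : Set M') = N.map φ := by
    rw [Finset.coe_image, Submodule.span_image, hspan]
  exact le_trans (mu_le' h) (le_trans Finset.card_image_le hcard.le)

lemma mu_le_add (ψ : M →ₗ[A] M') (N : Submodule A M)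
    (h1 : (N ⊓ LinearMap.ker ψ).FG) (h2 : (N.map ψ).FG) :
    mu A N ≤ mu A (N ⊓ LinearMap.ker ψ) + mu A (N.map ψ) := by
  classical
  obtain ⟨s, hs, hsspan⟩ := mu_spec h1
  obtain ⟨t, ht, htspan⟩ := mu_spec h2
  have hchoice : ∀ y ∈ t, ∃ x, x ∈ N ∧ ψ x = y := by
    intro y hy
    have hmem : y ∈ N.map ψ := htspan ▸ Submodule.subset_span hy
    obtain ⟨x, hx, rfl⟩ := hmem; exact ⟨x, hx, rfl⟩
  choose c hc1 hc2 using hchoice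
  set t' : Finset M := t.attach.image (fun y => c y.1 y.2) with ht'
  have ht'sub : ∀ x ∈ t', x ∈ N := by
    intro x hx
    simp only [ht', Finset.mem_image, Finset.mem_attach, true_and, Subtype.exists] at hx
    obtain ⟨y, hy, rfl⟩ := hx
    exact hc1 y hy
  have key : Submodule.span A ((s ∪ t' : Finset M) : Set M) = N := by
    apply le_antisymm
    · rw [Submodule.span_le]
      intro x hx
      simp only [Finset.coe_union, Set.mem_union, Finset.mem_coe] at hx
      rcases hx with hx | hx
      · exact ((hsspan ▸ Submodule.subset_span hx : x ∈ N ⊓ LinearMap.ker ψ)).1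
      · exact ht'sub x hx
    · intro x hxN
      have hψx : ψ x ∈ Submodule.span A (t : Set M') := by
        rw [htspan]; exact Submodule.mem_map_of_mem hxN
      have himg : (t : Set M') ⊆ ψ '' (t' : Set M) := by
        intro y hy
        refine ⟨c y hy, ?_, hc2 y hy⟩
        have : c y hy ∈ t' := Finset.mem_image.mpr ⟨⟨y, hy⟩, Finset.mem_attach _ _, rfl⟩
        exact this
      have hmem : ψ x ∈ Submodule.map ψ (Submodule.span A (t' : Set M)) := by
        rw [← Submodule.span_image]
        exact Submodule.span_mono himg hψx
      obtain ⟨u, hu, hux⟩ := hmem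
      have huN : u ∈ N := by
        have : Submodule.span A (t' : Set M) ≤ N := Submodule.span_le.mpr fun x hx => ht'sub x hx
        exact this hu
      have hxu : x - u ∈ N ⊓ LinearMap.ker ψ :=
        ⟨sub_mem hxN huN, by simp [LinearMap.mem_ker, map_sub, hux]⟩
      have h1' : x - u ∈ Submodule.span A ((s ∪ t' : Finset M) : Set M) := by
        rw [← hsspan] at hxu
        refine Submodule.span_mono ?_ hxu
        simp only [Finset.coe_union]; exact Set.subset_union_left
      have h2' : u ∈ Submodule.span A ((s ∪ t' : Finset M) : Set M) := by
        refine Submodule.span_mono ?_ hu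
        simp only [Finset.coe_union]; exact Set.subset_union_right
      simpa using add_mem h1' h2'
  calc mu A N ≤ (s ∪ t').card := mu_le' key
    _ ≤ s.card + t'.card := Finset.card_union_le _ _
    _ ≤ s.card + t.card := by
        have h3 : t'.card ≤ t.attach.card := Finset.card_image_le
        have h4 : t.attach.card = t.card := Finset.card_attach
        omega
    _ = mu A (N ⊓ LinearMap.ker ψ) + mu A (N.map ψ) := by rw [hs, ht]

end muLemmas



section flen
variable {A X : Type*} [Ring A] [AddCommGroup X] [Module A X]

lemma exists_ltSeries_comb (S : Submodule A X)
    (p : LTSeries (Submodule A S)) (q : LTSeries (Submodule A (X ⧸ S))) :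
    ∃ r : LTSeries (Submodule A X), p.length + q.length ≤ r.length := by
  have hmapinj : Function.Injective (Submodule.map S.subtype) :=
    Submodule.map_injective_of_injective S.injective_subtype
  have hmap : StrictMono (Submodule.map S.subtype) := fun a b hab =>
    lt_of_le_of_ne (Submodule.map_mono hab.le) (fun h => hab.ne (hmapinj h))
  have hcominj : Function.Injective (Submodule.comap S.mkQ) :=
    Submodule.comap_injective_of_surjective (Submodule.mkQ_surjective S)
  have hcom : StrictMono (Submodule.comap S.mkQ) := fun a b hab =>
    lt_of_le_of_ne (Submodule.comap_mono hab.le) fun h => hab.ne (hcominj h)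
  set p' := p.map _ hmap with hp'
  set q' := q.map _ hcom with hq'
  have hle : p'.last ≤ q'.head := by
    have h1 : p'.last ≤ S := by
      rw [hp', LTSeries.last_map]
      exact (Submodule.map_subtype_le S _)
    have h2 : S ≤ q'.head := by
      rw [hq', LTSeries.head_map]
      intro x hx
      simp [Submodule.mem_comap, Submodule.Quotient.mk_eq_zero, hx,
        (Submodule.Quotient.mk_eq_zero S).mpr hx]
    exact h1.trans h2
  rcases eq_or_lt_of_le hle with h | h
  · exact ⟨p'.smash q' h, by simp [hp', hq']⟩
  · exact ⟨p'.append q' h, by simp only [hp', hq', RelSeries.append_length, LTSeries.map_length]; omega⟩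

lemma finiteDimensionalOrder_of_bounded {γ : Type*} [Preorder γ] [Nonempty γ]
    (n : ℕ) (hn : ∀ p : LTSeries γ, p.length ≤ n) : FiniteDimensionalOrder γ := by
  have hne : {l | ∃ p : LTSeries γ, p.length = l}.Nonempty :=
    ⟨0, RelSeries.singleton _ (Classical.arbitrary γ), rfl⟩
  have hbdd : BddAbove {l | ∃ p : LTSeries γ, p.length = l} :=
    ⟨n, fun l ⟨p, hp⟩ => hp ▸ hn p⟩
  obtain ⟨p, hp⟩ := Nat.sSup_mem hne hbdd
  exact ⟨⟨p, fun q => hp ▸ le_csSup hbdd ⟨q, rfl⟩⟩⟩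

lemma flength_eq_longest {γ : Type*} [Preorder γ] [FiniteDimensionalOrder γ] :
    ((Order.krullDim γ).unbotD 0).toNat = (LTSeries.longestOf γ).length := by
  rw [Order.krullDim_eq_length_of_finiteDimensionalOrder]
  rfl

lemma flength_sub_add_quot (S : Submodule A X)
    (n : ℕ) (hn : ∀ r : LTSeries (Submodule A X), r.length ≤ n) :
    flength A S + flength A (X ⧸ S) ≤ flength A X := by
  have hmapinj : Function.Injective (Submodule.map S.subtype) :=
    Submodule.map_injective_of_injective S.injective_subtype
  have hmap : StrictMono (Submodule.map S.subtype) := fun a b hab =>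
    lt_of_le_of_ne (Submodule.map_mono hab.le) (fun h => hab.ne (hmapinj h))
  have hcominj : Function.Injective (Submodule.comap S.mkQ) :=
    Submodule.comap_injective_of_surjective (Submodule.mkQ_surjective S)
  have hcom : StrictMono (Submodule.comap S.mkQ) := fun a b hab =>
    lt_of_le_of_ne (Submodule.comap_mono hab.le) fun h => hab.ne (hcominj h)
  have fdX : FiniteDimensionalOrder (Submodule A X) := finiteDimensionalOrder_of_bounded n hn
  have fdS : FiniteDimensionalOrder (Submodule A S) :=
    finiteDimensionalOrder_of_bounded n (fun p => by simpa using hn (p.map _ hmap))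
  have fdQ : FiniteDimensionalOrder (Submodule A (X ⧸ S)) :=
    finiteDimensionalOrder_of_bounded n (fun p => by simpa using hn (p.map _ hcom))
  unfold flength
  rw [flength_eq_longest, flength_eq_longest, flength_eq_longest]
  obtain ⟨r, hr⟩ := exists_ltSeries_comb S (LTSeries.longestOf _) (LTSeries.longestOf _)
  exact hr.trans (LTSeries.longestOf_is_longest r)

end flen

section bounded
variable {A : Type*} [Ring A]

lemma comap_subtype_lt_comap_subtype {X : Type*} [AddCommGroup X] [Module A X]
    {N s t : Submodule A X} (hst : s < t) (htN : t ≤ N) :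
    Submodule.comap N.subtype s < Submodule.comap N.subtype t := by
  refine lt_of_le_of_ne (Submodule.comap_mono hst.le) fun h => hst.ne ?_
  have h2 := congrArg (Submodule.map N.subtype) h
  rwa [Submodule.map_comap_subtype, Submodule.map_comap_subtype,
    inf_eq_right.mpr (hst.le.trans htN), inf_eq_right.mpr htN] at h2

lemma bounded_of_isFiniteLength {X : Type*} [AddCommGroup X] [Module A X]
    (h : IsFiniteLength A X) : ∃ n : ℕ, ∀ p : LTSeries (Submodule A X), p.length ≤ n := by
  induction' h with M _ _ _ M _ _ N _ hN ih
  · refine ⟨0, fun p => ?_⟩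
    by_contra hc
    exact (show p _ < p _ from p.step ⟨0, by omega⟩).ne (Subsingleton.elim _ _)
  · obtain ⟨n, hn⟩ := ih
    have hcoatom : IsCoatom N := isSimpleModule_iff_isCoatom.mp ‹_›
    refine ⟨2 * n + 1, fun p => ?_⟩
    by_cases hall : ∀ i, p i ≤ N
    · have hr : p.length ≤ n := hn ⟨p.length, fun i => Submodule.comap N.subtype (p i),
        fun i => comap_subtype_lt_comap_subtype (p.step i) (hall _)⟩
      omega
    · push_neg at hall
      obtain ⟨i₀, hi₀⟩ := hall
      classical
      have hPex : ∃ j : ℕ, ∃ hj : j < p.length + 1, ¬ p ⟨j, hj⟩ ≤ N :=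
        ⟨i₀.1, i₀.2, by simpa using hi₀⟩
      set K := Nat.find hPex with hKdef
      obtain ⟨hK_lt, hKnot⟩ := Nat.find_spec hPex
      have hbelow : ∀ j (hj : j < K), p ⟨j, by omega⟩ ≤ N := by
        intro j hj
        by_contra hc
        exact (Nat.find_min hPex hj) ⟨by omega, hc⟩
      have hKsup : p ⟨K, hK_lt⟩ ⊔ N = ⊤ := by
        refine hcoatom.2 _ (lt_of_le_of_ne le_sup_right fun hE => hKnot ?_)
        exact sup_eq_right.mp hE.symm
      have hsup_top : ∀ j (hj : K ≤ j) (hj' : j < p.length + 1), p ⟨j, hj'⟩ ⊔ N = ⊤ := by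
        intro j hj hj'
        refine eq_top_iff.mpr ?_
        rw [← hKsup]
        exact sup_le_sup_right (p.monotone (by simp [Fin.mk_le_mk]; omega)) N
      -- chain 2 : indices K .. p.length
      have hr2 : p.length - K ≤ n := by
        refine hn ⟨p.length - K, fun j => Submodule.comap N.subtype (p ⟨K + j.1, by omega⟩ ⊓ N),
          fun j => ?_⟩
        refine comap_subtype_lt_comap_subtype ?_ inf_le_right
        have hstep : p ⟨K + j.1, by omega⟩ < p ⟨K + j.1 + 1, by omega⟩ := by
          have : p _ < p _ := p.step ⟨K + j.1, by omega⟩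
          convert this using 2 <;> rfl
        have hsups : p ⟨K + j.1 + 1, by omega⟩ ⊔ N ≤ p ⟨K + j.1, by omega⟩ ⊔ N := by
          rw [hsup_top _ (by omega) (by omega), hsup_top _ (by omega) (by omega)]
        have := inf_lt_inf_of_lt_of_sup_le_sup hstep hsups
        convert this using 2 <;> rfl
      have hr1 : K ≤ n + 1 := by
        rcases Nat.eq_zero_or_pos K with h0 | h0
        · omega
        · have : K - 1 ≤ n := by
            refine hn ⟨K - 1, fun j => Submodule.comap N.subtype (p ⟨j.1, by omega⟩),
              fun j => ?_⟩
            refine comap_subtype_lt_comap_subtype ?_ (hbelow (j.1 + 1) (by omega))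
            have : p _ < p _ := p.step ⟨j.1, by omega⟩
            convert this using 2 <;> rfl
          omega
      omega
end bounded

section exact
variable {A : Type*} [Ring A]

lemma flength_congr {M M' : Type*} [AddCommGroup M] [Module A M] [AddCommGroup M'] [Module A M']
    (e : M ≃ₗ[A] M') : flength A M = flength A M' := by
  unfold flength
  rw [Order.krullDim_eq_of_orderIso (Submodule.orderIsoMapComap e)]

lemma flength_add_le_of_exact {P X Q : Type*} [AddCommGroup P] [Module A P]
    [AddCommGroup X] [Module A X] [AddCommGroup Q] [Module A Q]
    (φ : P →ₗ[A] X) (ψ : X →ₗ[A] Q) (hφ : Function.Injective φ) (hψ : Function.Surjective ψ)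
    (hexact : LinearMap.range φ = LinearMap.ker ψ) (hX : IsFiniteLength A X) :
    flength A P + flength A Q ≤ flength A X := by
  obtain ⟨n, hn⟩ := bounded_of_isFiniteLength hX
  have e1 : flength A P = flength A (LinearMap.range φ) :=
    flength_congr (LinearEquiv.ofInjective φ hφ)
  have e2 : flength A Q = flength A (X ⧸ LinearMap.range φ) := by
    rw [hexact]
    exact (flength_congr (ψ.quotKerEquivOfSurjective hψ)).symm
  rw [e1, e2]
  exact flength_sub_add_quot (LinearMap.range φ) n hn

end exact

/-- the "few generators relative to colength for deep submodules" property
passes across a short exact sequence `0 → L₁ → L → L₂ → 0`. -/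
theorem stmt_19 (A : Type*) [CommRing A] [IsLocalRing A] [IsNoetherianRing A]
    (L₁ L L₂ : Type*) [AddCommGroup L₁] [Module A L₁] [Module.Finite A L₁]
    [AddCommGroup L] [Module A L] [Module.Finite A L]
    [AddCommGroup L₂] [Module A L₂] [Module.Finite A L₂]
    (f : L₁ →ₗ[A] L) (g : L →ₗ[A] L₂)
    (hf : Function.Injective f) (hg : Function.Surjective g) (hfg : Function.Exact f g)
    (H₁ : ∀ ε : ℝ, 0 < ε → ∃ N₁ : ℕ, ∀ M₁ : Submodule A L₁,
      M₁ ≤ (maximalIdeal A ^ N₁) • (⊤ : Submodule A L₁) → IsFiniteLength A (L₁ ⧸ M₁) →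
      (mu A M₁ : ℝ) < ε * (flength A (L₁ ⧸ M₁) : ℝ))
    (H₂ : ∀ ε : ℝ, 0 < ε → ∃ N₂ : ℕ, ∀ M₂ : Submodule A L₂,
      M₂ ≤ (maximalIdeal A ^ N₂) • (⊤ : Submodule A L₂) → IsFiniteLength A (L₂ ⧸ M₂) →
      (mu A M₂ : ℝ) < ε * (flength A (L₂ ⧸ M₂) : ℝ)) :
    ∀ ε : ℝ, 0 < ε → ∃ N : ℕ, ∀ M : Submodule A L,
      M ≤ (maximalIdeal A ^ N) • (⊤ : Submodule A L) → IsFiniteLength A (L ⧸ M) →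
      (mu A M : ℝ) < ε * (flength A (L ⧸ M) : ℝ) := by
  intro ε hε
  obtain ⟨N₁, h₁⟩ := H₁ ε hε
  obtain ⟨N₂, h₂⟩ := H₂ ε hε
  obtain ⟨k, hk⟩ := artin_rees (maximalIdeal A) (LinearMap.range f)
  set I := maximalIdeal A with hI
  set N := max (N₁ + k) N₂ with hNdef
  refine ⟨N, fun M hM hfin => ?_⟩
  set M₁ : Submodule A L₁ := Submodule.comap f M with hM₁def
  set M₂ : Submodule A L₂ := Submodule.map g M with hM₂def
  have hkN : k ≤ N := le_trans (by omega) (le_max_left (N₁ + k) N₂)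
  have hM₂b : M₂ ≤ I ^ N₂ • (⊤ : Submodule A L₂) := by
    calc M₂ ≤ Submodule.map g (I ^ N • ⊤) := Submodule.map_mono hM
      _ = I ^ N • Submodule.map g ⊤ := Submodule.map_smul'' _ _ _
      _ = I ^ N • ⊤ := by rw [Submodule.map_top, LinearMap.range_eq_top.mpr hg]
      _ ≤ I ^ N₂ • ⊤ := Submodule.smul_mono_left (Ideal.pow_le_pow_right (le_max_right _ _))
  have hM₁b : M₁ ≤ I ^ N₁ • (⊤ : Submodule A L₁) := by
    rw [← Submodule.map_le_map_iff_of_injective hf]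
    have e1 : Submodule.map f M₁ = LinearMap.range f ⊓ M := Submodule.map_comap_eq f M
    have e2 : Submodule.map f (I ^ N₁ • ⊤) = I ^ N₁ • LinearMap.range f := by
      rw [Submodule.map_smul'', Submodule.map_top]
    rw [e1, e2]
    calc LinearMap.range f ⊓ M ≤ I ^ N • ⊤ ⊓ LinearMap.range f :=
          le_inf (inf_le_right.trans hM) inf_le_left
      _ = I ^ (N - k) • (I ^ k • ⊤ ⊓ LinearMap.range f) := hk N hkN
      _ ≤ I ^ (N - k) • LinearMap.range f := smul_mono_right _ inf_le_right
      _ ≤ I ^ N₁ • LinearMap.range f :=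
          Submodule.smul_mono_left (Ideal.pow_le_pow_right (by omega))
  set φ : L₁ ⧸ M₁ →ₗ[A] L ⧸ M := Submodule.mapQ M₁ M f (le_refl _) with hφdef
  set ψ : L ⧸ M →ₗ[A] L₂ ⧸ M₂ := Submodule.mapQ M M₂ g (Submodule.le_comap_map g M) with hψdef
  have hφ : Function.Injective φ := by
    rw [← LinearMap.ker_eq_bot, eq_bot_iff]
    intro x hx
    obtain ⟨y, rfl⟩ := M₁.mkQ_surjective x
    rw [LinearMap.mem_ker, hφdef, Submodule.mkQ_apply, Submodule.mapQ_apply,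
      Submodule.Quotient.mk_eq_zero] at hx
    rw [Submodule.mem_bot, Submodule.mkQ_apply, Submodule.Quotient.mk_eq_zero]
    exact hx
  have hψ : Function.Surjective ψ := by
    intro z
    obtain ⟨w, rfl⟩ := M₂.mkQ_surjective z
    obtain ⟨x, rfl⟩ := hg w
    exact ⟨M.mkQ x, by rw [hψdef, Submodule.mkQ_apply, Submodule.mapQ_apply, Submodule.mkQ_apply]⟩
  have hker : LinearMap.ker g = LinearMap.range f := (LinearMap.exact_iff.mp hfg)
  have hexact : LinearMap.range φ = LinearMap.ker ψ := by
    ext z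
    constructor
    · rintro ⟨y, rfl⟩
      obtain ⟨x, rfl⟩ := M₁.mkQ_surjective y
      rw [LinearMap.mem_ker, hφdef, hψdef, Submodule.mkQ_apply, Submodule.mapQ_apply,
        Submodule.mapQ_apply, hfg.apply_apply_eq_zero, Submodule.Quotient.mk_eq_zero]
      exact Submodule.zero_mem _
    · intro hz
      obtain ⟨x, rfl⟩ := M.mkQ_surjective z
      rw [LinearMap.mem_ker, hψdef, Submodule.mkQ_apply, Submodule.mapQ_apply,
        Submodule.Quotient.mk_eq_zero] at hz
      obtain ⟨m, hm, hgm⟩ := hz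
      have hx : x - m ∈ LinearMap.range f := by
        rw [← hker, LinearMap.mem_ker, map_sub, hgm, sub_self]
      obtain ⟨y, hy⟩ := hx
      refine ⟨M₁.mkQ y, ?_⟩
      rw [hφdef, Submodule.mkQ_apply, Submodule.mapQ_apply, hy, Submodule.mkQ_apply]
      rw [Submodule.Quotient.eq]
      simpa using M.neg_mem hm
  obtain ⟨hnoe, hart⟩ := (isFiniteLength_iff_isNoetherian_isArtinian).mp hfin
  have fin1 : IsFiniteLength A (L₁ ⧸ M₁) := by
    haveI := hnoe; haveI := hart
    exact (isFiniteLength_iff_isNoetherian_isArtinian).mpr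
      ⟨isNoetherian_of_injective φ hφ, isArtinian_of_injective φ hφ⟩
  have fin2 : IsFiniteLength A (L₂ ⧸ M₂) := by
    haveI := hnoe; haveI := hart
    exact (isFiniteLength_iff_isNoetherian_isArtinian).mpr
      ⟨isNoetherian_of_surjective ψ (LinearMap.range_eq_top.mpr hψ),
       isArtinian_of_surjective _ ψ hψ⟩
  have hlen := flength_add_le_of_exact φ ψ hφ hψ hexact hfin
  have hmu1 : mu A M ≤ mu A (M ⊓ LinearMap.ker g) + mu A M₂ :=
    mu_le_add g M (IsNoetherian.noetherian _) (IsNoetherian.noetherian _)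
  have hinf : M ⊓ LinearMap.ker g = Submodule.map f M₁ := by
    rw [hker, hM₁def, Submodule.map_comap_eq, inf_comm]
  have hmu2 : mu A (Submodule.map f M₁) ≤ mu A M₁ := mu_map_le f (IsNoetherian.noetherian _)
  have q1 := h₁ M₁ hM₁b fin1
  have q2 := h₂ M₂ hM₂b fin2
  have hmuM : (mu A M : ℝ) ≤ (mu A M₁ : ℝ) + (mu A M₂ : ℝ) := by
    have h5 := hmu1
    rw [hinf] at h5
    exact_mod_cast h5.trans (add_le_add_left hmu2 _)
  have hlenR : (flength A (L₁ ⧸ M₁) : ℝ) + (flength A (L₂ ⧸ M₂) : ℝ)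
      ≤ (flength A (L ⧸ M) : ℝ) := by exact_mod_cast hlen
  calc (mu A M : ℝ) ≤ (mu A M₁ : ℝ) + (mu A M₂ : ℝ) := hmuM
    _ < ε * (flength A (L₁ ⧸ M₁) : ℝ) + ε * (flength A (L₂ ⧸ M₂) : ℝ) := add_lt_add q1 q2
    _ = ε * ((flength A (L₁ ⧸ M₁) : ℝ) + (flength A (L₂ ⧸ M₂) : ℝ)) := (mul_add _ _ _).symm
    _ ≤ ε * (flength A (L ⧸ M) : ℝ) := mul_le_mul_of_nonneg_left hlenR hε.le
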